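/- Assume P(I(Θ) ∈ ℤ) = 1. Then P(I(Θ) = 0) > 0, for every nonnegative measurable function H on E one has ∫_E H dν = Σ_{j∈ℤ} ∫_0^∞ E[H(r B^j Θ) · 1{I(Θ) = 0}] α r^{−α−1} dr, and moreover Σ_{j∈ℤ} E[‖Θ_j‖^α · 1{I(Θ) = 0}] = 1. -/

import Mathlib

open MeasureTheory ProbabilityTheory Set Filter
open scoped ENNReal NNReal Topology

noncomputable section

/-- The iterated backshift operator: `(B^k x) j = x (j - k)`. -/
def backshift {V : Type*} (k : ℤ) (x : ℤ → V) : ℤ → V := fun j => x (j - k)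

/-- `InfargmaxAt x j` is the event `I(x) = j` for the infargmax functional `I`:
the first time the supremum of the norms is achieved is `j`, i.e.
`sup_{i<j} ‖x_i‖ < ‖x_j‖` and `sup_{i>j} ‖x_i‖ ≤ ‖x_j‖`.  (`I(x) ∈ ℤ` is then
expressed as `∃ j, InfargmaxAt x j`.) -/
def InfargmaxAt {V : Type*} [NormedAddCommGroup V] (x : ℤ → V) (j : ℤ) : Prop :=
  (⨆ i : {i : ℤ // i < j}, (‖x i.1‖₊ : ℝ≥0∞)) < (‖x j‖₊ : ℝ≥0∞) ∧
    (⨆ i : {i : ℤ // j < i}, (‖x i.1‖₊ : ℝ≥0∞)) ≤ (‖x j‖₊ : ℝ≥0∞)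

section Aux
variable {V : Type*} [NormedAddCommGroup V]

lemma backshift_backshift (k m : ℤ) (x : ℤ → V) :
    backshift k (backshift m x) = backshift (k + m) x := by
  funext j; simp [backshift, sub_sub]

lemma backshift_zero' (x : ℤ → V) : backshift 0 x = x := by
  funext j; simp [backshift]

lemma backshift_smul [NormedSpace ℝ V] (k : ℤ) (r : ℝ) (x : ℤ → V) :
    backshift k (r • x) = r • backshift k x := rfl

lemma measurable_backshift {W : Type*} [MeasurableSpace W] (k : ℤ) :
    Measurable (backshift (V := W) k) :=
  measurable_pi_lambda _ fun j => measurable_pi_apply (j - k)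

lemma infargmaxAt_backshift (k : ℤ) (x : ℤ → V) (j : ℤ) :
    InfargmaxAt (backshift k x) j ↔ InfargmaxAt x (j - k) := by
  have h1 : (⨆ i : {i : ℤ // i < j}, (‖(backshift k x) i.1‖₊ : ℝ≥0∞))
      = ⨆ i : {i : ℤ // i < j - k}, (‖x i.1‖₊ : ℝ≥0∞) := by
    apply le_antisymm
    · exact iSup_le fun i => le_iSup_of_le ⟨i.1 - k, by omega⟩ le_rfl
    · exact iSup_le fun i => le_iSup_of_le ⟨i.1 + k, by omega⟩
        (le_of_eq (by simp [backshift]))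
  have h2 : (⨆ i : {i : ℤ // j < i}, (‖(backshift k x) i.1‖₊ : ℝ≥0∞))
      = ⨆ i : {i : ℤ // j - k < i}, (‖x i.1‖₊ : ℝ≥0∞) := by
    apply le_antisymm
    · exact iSup_le fun i => le_iSup_of_le ⟨i.1 - k, by omega⟩ le_rfl
    · exact iSup_le fun i => le_iSup_of_le ⟨i.1 + k, by omega⟩
        (le_of_eq (by simp [backshift]))
  unfold InfargmaxAt
  rw [h1, h2]
  exact Iff.rfl

lemma infargmaxAt_smul [NormedSpace ℝ V] {r : ℝ} (hr : 0 < r) (x : ℤ → V) (j : ℤ) :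
    InfargmaxAt (r • x) j ↔ InfargmaxAt x j := by
  have hn : ∀ i, (‖(r • x) i‖₊ : ℝ≥0∞) = (‖r‖₊ : ℝ≥0∞) * (‖x i‖₊ : ℝ≥0∞) := by
    intro i
    rw [Pi.smul_apply, nnnorm_smul, ENNReal.coe_mul]
  have hc0 : (‖r‖₊ : ℝ≥0∞) ≠ 0 := by
    simp [nnnorm_eq_zero, hr.ne']
  have hct : (‖r‖₊ : ℝ≥0∞) ≠ ⊤ := ENNReal.coe_ne_top
  unfold InfargmaxAt
  simp only [hn, ← ENNReal.mul_iSup]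
  rw [ENNReal.mul_lt_mul_iff_right hc0 hct, ENNReal.mul_le_mul_iff_right hc0 hct]

lemma infargmaxAt_unique (x : ℤ → V) {j j' : ℤ} (h : InfargmaxAt x j)
    (h' : InfargmaxAt x j') : j = j' := by
  by_contra hne
  rcases lt_or_gt_of_ne hne with hlt | hlt
  · exact absurd
      (le_trans (le_iSup (fun i : {i : ℤ // j < i} => (‖x i.1‖₊ : ℝ≥0∞)) ⟨j', hlt⟩) h.2)
      (lt_of_le_of_lt (le_iSup (fun i : {i : ℤ // i < j'} => (‖x i.1‖₊ : ℝ≥0∞)) ⟨j, hlt⟩) h'.1).not_ge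
  · exact absurd
      (le_trans (le_iSup (fun i : {i : ℤ // j' < i} => (‖x i.1‖₊ : ℝ≥0∞)) ⟨j, hlt⟩) h'.2)
      (lt_of_le_of_lt (le_iSup (fun i : {i : ℤ // i < j} => (‖x i.1‖₊ : ℝ≥0∞)) ⟨j', hlt⟩) h.1).not_ge

lemma infargmaxAt_ne_zero (x : ℤ → V) (j : ℤ) (h : InfargmaxAt x j) : x j ≠ 0 := by
  intro h0
  have := h.1
  rw [h0] at this
  simp at this

lemma measurableSet_infargmaxAt [MeasurableSpace V] [BorelSpace V] (j : ℤ) :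
    MeasurableSet {x : ℤ → V | InfargmaxAt x j} := by
  have m1 : ∀ s : Set ℤ, Measurable (fun x : ℤ → V => ⨆ i : s, (‖x i.1‖₊ : ℝ≥0∞)) := by
    intro s
    exact Measurable.iSup fun i => ((measurable_pi_apply (i.1 : ℤ)).nnnorm).coe_nnreal_ennreal
  have mj : Measurable (fun x : ℤ → V => (‖x j‖₊ : ℝ≥0∞)) := by
    exact ((measurable_pi_apply j).nnnorm).coe_nnreal_ennreal
  have h1 : MeasurableSet {x : ℤ → V |
      (⨆ i : {i : ℤ // i < j}, (‖x i.1‖₊ : ℝ≥0∞)) < (‖x j‖₊ : ℝ≥0∞)} :=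
    measurableSet_lt (m1 {i : ℤ | i < j}) mj
  have h2 : MeasurableSet {x : ℤ → V |
      (⨆ i : {i : ℤ // j < i}, (‖x i.1‖₊ : ℝ≥0∞)) ≤ (‖x j‖₊ : ℝ≥0∞)} :=
    measurableSet_le (m1 {i : ℤ | j < i}) mj
  exact h1.inter h2

lemma lintegral_Ioi_alpha {α : ℝ} (hα : 0 < α) {a : ℝ} (ha : 0 < a) :
    ∫⁻ r in Ioi a, ENNReal.ofReal (α * r ^ (-α - 1)) = ENNReal.ofReal (a ^ (-α)) := by
  have hint : IntegrableOn (fun r : ℝ => α * r ^ (-α - 1)) (Ioi a) :=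
    (integrableOn_Ioi_rpow_of_lt (by linarith) ha).const_mul α
  have hnn : 0 ≤ᵐ[volume.restrict (Ioi a)] fun r : ℝ => α * r ^ (-α - 1) := by
    filter_upwards [ae_restrict_mem measurableSet_Ioi] with r hr
    exact mul_nonneg hα.le (Real.rpow_nonneg (le_of_lt (lt_trans ha hr)) _)
  rw [← ofReal_integral_eq_lintegral_ofReal hint hnn]
  congr 1
  rw [MeasureTheory.integral_const_mul, integral_Ioi_rpow_of_lt (by linarith) ha]
  rw [show -α - 1 + 1 = -α by ring]
  field_simp

lemma lintegral_if_pareto {α : ℝ} (hα : 0 < α) (c : ℝ) (hc : 0 ≤ c) :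
    ∫⁻ r in Ioi (0 : ℝ),
      (if 1 < r * c then (1 : ℝ≥0∞) else 0) * ENNReal.ofReal (α * r ^ (-α - 1))
      = ENNReal.ofReal (c ^ α) := by
  rcases eq_or_lt_of_le hc with hc0 | hc0
  · rw [show c ^ α = 0 by rw [← hc0, Real.zero_rpow hα.ne']]
    simp only [← hc0, mul_zero, if_neg (by norm_num : ¬ (1:ℝ) < 0), zero_mul,
      lintegral_zero, ENNReal.ofReal_zero]
  · have hiff : ∀ r : ℝ, 1 < r * c ↔ c⁻¹ < r := by
      intro r
      rw [← one_div, div_lt_iff₀ hc0]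
    have hkey : ∀ r ∈ Ioi (0 : ℝ),
        (if 1 < r * c then (1 : ℝ≥0∞) else 0) * ENNReal.ofReal (α * r ^ (-α - 1))
        = (Ioi c⁻¹).indicator (fun r => ENNReal.ofReal (α * r ^ (-α - 1))) r := by
      intro r _
      simp only [Set.indicator_apply, Set.mem_Ioi]
      by_cases h : c⁻¹ < r
      · rw [if_pos h, if_pos ((hiff r).mpr h), one_mul]
      · rw [if_neg h, if_neg (fun hh => h ((hiff r).mp hh)), zero_mul]
    rw [setLIntegral_congr_fun measurableSet_Ioi hkey,
      lintegral_indicator measurableSet_Ioi, Measure.restrict_restrict measurableSet_Ioi,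
      Set.inter_eq_self_of_subset_left (Set.Ioi_subset_Ioi (inv_pos.mpr hc0).le),
      lintegral_Ioi_alpha hα (inv_pos.mpr hc0),
      Real.inv_rpow hc, Real.rpow_neg hc, inv_inv]

end Aux


/-- **Recovering the tail measure from the spectral tail process conditioned to
achieve its first maximum at time zero.**  If `P(I(Θ) ∈ ℤ) = 1` then `P(I(Θ) = 0) > 0`,
`ν(H) = Σ_{j∈ℤ} ∫_0^∞ E[H(r B^j Θ) 1{I(Θ)=0}] α r^{−α−1} dr` for every nonnegative
measurable `H`, and `Σ_{j∈ℤ} E[‖Θ_j‖^α 1{I(Θ)=0}] = 1`. -/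
theorem statement3
    -- `V` plays the role of `ℝ^d` (`d ≥ 1`) equipped with an arbitrary norm
    {V : Type*} [NormedAddCommGroup V] [NormedSpace ℝ V] [FiniteDimensional ℝ V]
    [Nontrivial V] [MeasurableSpace V] [BorelSpace V]
    (α : ℝ) (hα : 0 < α)
    -- the tail measure and its properties
    (ν : Measure (ℤ → V))
    (hν0 : ν {0} = 0)
    (hν1 : ν {y : ℤ → V | 1 < ‖y 0‖} = 1)
    (hνshift : ν.map (backshift 1) = ν)
    (hνhom : ∀ A : Set (ℤ → V), MeasurableSet A → ∀ c : ℝ, 0 < c →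
      ν ((fun x => c • x) '' A) = ENNReal.ofReal (c ^ (-α)) * ν A)
    -- the tail process `Y` and the spectral tail process `Θ`
    {Ω : Type*} [MeasurableSpace Ω] (P : Measure Ω) [IsProbabilityMeasure P]
    (Y : Ω → ℤ → V) (hYmeas : Measurable Y)
    (hYlaw : P.map Y = ν.restrict {y : ℤ → V | 1 < ‖y 0‖})
    (Θ : Ω → ℤ → V) (hΘdef : ∀ ω, Θ ω = ‖Y ω 0‖⁻¹ • Y ω)
    (hPareto : ∀ u : ℝ, 1 ≤ u → P {ω | u < ‖Y ω 0‖} = ENNReal.ofReal (u ^ (-α)))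
    (hindep : IndepFun (fun ω => ‖Y ω 0‖) Θ P)
    (hpolar : ∀ H : (ℤ → V) → ℝ≥0∞, Measurable H →
      ∫⁻ y in {y : ℤ → V | y 0 ≠ 0}, H y ∂ν
        = ∫⁻ r in Ioi (0 : ℝ),
            (∫⁻ ω, H (r • Θ ω) ∂P) * ENNReal.ofReal (α * r ^ (-α - 1)))
    -- the statement
    (hI : P {ω | ∃ j : ℤ, InfargmaxAt (Θ ω) j} = 1) :
    0 < P {ω | InfargmaxAt (Θ ω) 0} ∧
      (∀ H : (ℤ → V) → ℝ≥0∞, Measurable H →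
        ∫⁻ y, H y ∂ν
          = ∑' j : ℤ, ∫⁻ r in Ioi (0 : ℝ),
              (∫⁻ ω in {ω | InfargmaxAt (Θ ω) 0}, H (r • backshift j (Θ ω)) ∂P) *
                ENNReal.ofReal (α * r ^ (-α - 1))) ∧
      (∑' j : ℤ, ∫⁻ ω in {ω | InfargmaxAt (Θ ω) 0}, ENNReal.ofReal (‖Θ ω j‖ ^ α) ∂P
        = 1) := by
    classical
  -- measurability of Θ
  have mΘ : Measurable Θ := by
    have hΘ : Θ = fun ω => ‖Y ω 0‖⁻¹ • Y ω := funext hΘdef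
    rw [hΘ]
    apply measurable_pi_lambda
    intro i
    exact Measurable.smul (((measurable_pi_apply 0).comp hYmeas).norm.inv)
      ((measurable_pi_apply i).comp hYmeas)
  have mA : ∀ j : ℤ, MeasurableSet {y : ℤ → V | InfargmaxAt y j} :=
    fun j => measurableSet_infargmaxAt j
  have mW : MeasurableSet {ω | InfargmaxAt (Θ ω) 0} := mΘ (mA 0)
  have m0 : MeasurableSet {y : ℤ → V | y 0 ≠ 0} := by
    have h : {y : ℤ → V | y 0 ≠ 0} = (fun y : ℤ → V => y 0) ⁻¹' ({(0:V)}ᶜ) := rfl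
    rw [h]
    exact (measurable_pi_apply (0:ℤ)) (measurableSet_singleton (0:V)).compl
  -- shift invariance for every k
  have hmapneg : ν.map (backshift (-1 : ℤ)) = ν := by
    conv_lhs => rw [← hνshift]
    rw [Measure.map_map (measurable_backshift _) (measurable_backshift _)]
    have h : (backshift (-1 : ℤ) ∘ backshift (1 : ℤ)) = (id : (ℤ → V) → (ℤ → V)) := by
      funext x
      rw [Function.comp_apply, backshift_backshift]
      norm_num
      exact backshift_zero' x
    rw [h, Measure.map_id]
  have hmap : ∀ k : ℤ, ν.map (backshift k) = ν := by
    intro k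
    induction k using Int.induction_on with
    | zero =>
        rw [show (backshift (0:ℤ) : (ℤ → V) → (ℤ → V)) = id from funext backshift_zero',
          Measure.map_id]
    | succ n ih =>
        have h : (backshift ((n:ℤ)+1) : (ℤ → V) → (ℤ → V))
            = backshift 1 ∘ backshift (n:ℤ) := by
          funext x
          rw [Function.comp_apply, backshift_backshift]
          norm_num [add_comm]
        rw [h, ← Measure.map_map (measurable_backshift _) (measurable_backshift _), ih,
          hνshift]
    | pred n ih =>
        have h : (backshift (-(n:ℤ)-1) : (ℤ → V) → (ℤ → V))
            = backshift (-1) ∘ backshift (-(n:ℤ)) := by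
          funext x
          rw [Function.comp_apply, backshift_backshift]
          congr 1
          ring
        rw [h, ← Measure.map_map (measurable_backshift _) (measurable_backshift _), ih,
          hmapneg]
  -- the exceptional set
  have mNset : MeasurableSet {y : ℤ → V | ¬ ∃ j : ℤ, InfargmaxAt y j} := by
    have : {y : ℤ → V | ¬ ∃ j : ℤ, InfargmaxAt y j}
        = (⋃ j : ℤ, {y : ℤ → V | InfargmaxAt y j})ᶜ := by
      ext y; simp [Set.mem_iUnion]
    rw [this]
    exact (MeasurableSet.iUnion fun j => mA j).compl
  have hPN : P (Θ ⁻¹' {y : ℤ → V | ¬ ∃ j : ℤ, InfargmaxAt y j}) = 0 := by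
    have heq : Θ ⁻¹' {y : ℤ → V | ¬ ∃ j : ℤ, InfargmaxAt y j}
        = {ω | ∃ j : ℤ, InfargmaxAt (Θ ω) j}ᶜ := rfl
    rw [heq, measure_compl (by
      have : {ω | ∃ j : ℤ, InfargmaxAt (Θ ω) j} = ⋃ j : ℤ, {ω | InfargmaxAt (Θ ω) j} := by
        ext ω; simp [Set.mem_iUnion]
      rw [this]
      exact MeasurableSet.iUnion fun j => mΘ (mA j)) (measure_ne_top P _), hI]
    simp
  have hnull0 : ν ({y : ℤ → V | ¬ ∃ j : ℤ, InfargmaxAt y j} ∩ {y | y 0 ≠ 0}) = 0 := by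
    have hp := hpolar ({y : ℤ → V | ¬ ∃ j : ℤ, InfargmaxAt y j}.indicator fun _ => (1:ℝ≥0∞))
      (measurable_const.indicator mNset)
    rw [lintegral_indicator mNset, setLIntegral_one, Measure.restrict_apply mNset] at hp
    rw [hp]
    have hz : ∀ r ∈ Ioi (0:ℝ),
        (∫⁻ ω, ({y : ℤ → V | ¬ ∃ j : ℤ, InfargmaxAt y j}.indicator
          (fun _ => (1:ℝ≥0∞)) (r • Θ ω)) ∂P) * ENNReal.ofReal (α * r ^ (-α - 1))
        = 0 := by
      intro r hr
      have h1 : ∀ ω, ({y : ℤ → V | ¬ ∃ j : ℤ, InfargmaxAt y j}.indicator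
          (fun _ => (1:ℝ≥0∞)) (r • Θ ω))
          = ((Θ ⁻¹' {y : ℤ → V | ¬ ∃ j : ℤ, InfargmaxAt y j}).indicator
            (fun _ => (1:ℝ≥0∞)) ω) := by
        intro ω
        have hmemiff : (r • Θ ω ∈ {y : ℤ → V | ¬ ∃ j : ℤ, InfargmaxAt y j})
            ↔ (Θ ω ∈ {y : ℤ → V | ¬ ∃ j : ℤ, InfargmaxAt y j}) := by
          simp only [Set.mem_setOf_eq, not_iff_not]
          exact exists_congr fun j => infargmaxAt_smul hr (Θ ω) j
        by_cases h : Θ ω ∈ {y : ℤ → V | ¬ ∃ j : ℤ, InfargmaxAt y j}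
        · rw [Set.indicator_of_mem (hmemiff.mpr h),
            Set.indicator_of_mem (show ω ∈ Θ ⁻¹'
              {y : ℤ → V | ¬ ∃ j : ℤ, InfargmaxAt y j} from h)]
        · rw [Set.indicator_of_notMem (fun hh => h (hmemiff.mp hh)),
            Set.indicator_of_notMem (show ω ∉ Θ ⁻¹'
              {y : ℤ → V | ¬ ∃ j : ℤ, InfargmaxAt y j} from h)]
      rw [lintegral_congr h1, lintegral_indicator_const (mΘ mNset), hPN]
      simp
    rw [setLIntegral_congr_fun measurableSet_Ioi hz]
    simp
  have hnullk : ∀ k : ℤ,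
      ν ({y : ℤ → V | ¬ ∃ j : ℤ, InfargmaxAt y j} ∩ {y | y k ≠ 0}) = 0 := by
    intro k
    have hpre : backshift (-k) ⁻¹'
        ({y : ℤ → V | ¬ ∃ j : ℤ, InfargmaxAt y j} ∩ {y | y 0 ≠ 0})
        = {y : ℤ → V | ¬ ∃ j : ℤ, InfargmaxAt y j} ∩ {y | y k ≠ 0} := by
      ext y
      simp only [Set.mem_preimage, Set.mem_inter_iff, Set.mem_setOf_eq]
      have hmem : (¬ ∃ j : ℤ, InfargmaxAt (backshift (-k) y) j)
          ↔ ¬ ∃ j : ℤ, InfargmaxAt y j := by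
        apply not_congr
        constructor
        · rintro ⟨j, hj⟩
          exact ⟨j - -k, (infargmaxAt_backshift (-k) y j).mp hj⟩
        · rintro ⟨j, hj⟩
          refine ⟨j + -k, (infargmaxAt_backshift (-k) y (j + -k)).mpr ?_⟩
          rw [show j + -k - -k = j by ring]
          exact hj
      have h0 : backshift (-k) y 0 = y k := by
        show y (0 - -k) = y k
        congr 1
        ring
      rw [hmem, h0]
    rw [← hpre, ← Measure.map_apply (measurable_backshift (-k)) (mNset.inter m0),
      hmap (-k)]
    exact hnull0
  have hnuN : ν {y : ℤ → V | ¬ ∃ j : ℤ, InfargmaxAt y j} = 0 := by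
    have hsub : {y : ℤ → V | ¬ ∃ j : ℤ, InfargmaxAt y j}
        ⊆ {(0 : ℤ → V)} ∪ ⋃ k : ℤ,
          ({y : ℤ → V | ¬ ∃ j : ℤ, InfargmaxAt y j} ∩ {y | y k ≠ 0}) := by
      intro y hy
      by_cases h0 : y = 0
      · exact Or.inl h0
      · obtain ⟨k, hk⟩ : ∃ k, y k ≠ 0 := by
          by_contra hall
          push_neg at hall
          exact h0 (funext hall)
        exact Or.inr (Set.mem_iUnion.mpr ⟨k, hy, hk⟩)
    refine le_antisymm ?_ zero_le
    calc ν {y : ℤ → V | ¬ ∃ j : ℤ, InfargmaxAt y j}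
        ≤ ν ({(0 : ℤ → V)} ∪ ⋃ k : ℤ,
          ({y : ℤ → V | ¬ ∃ j : ℤ, InfargmaxAt y j} ∩ {y | y k ≠ 0})) :=
          measure_mono hsub
      _ ≤ ν {(0 : ℤ → V)} + ν (⋃ k : ℤ,
          ({y : ℤ → V | ¬ ∃ j : ℤ, InfargmaxAt y j} ∩ {y | y k ≠ 0})) :=
          measure_union_le _ _
      _ = 0 := by
          rw [hν0, measure_iUnion_null hnullk, add_zero]
  have hrestr : ν.restrict (⋃ j : ℤ, {y : ℤ → V | InfargmaxAt y j}) = ν := by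
    conv_rhs => rw [← Measure.restrict_univ (μ := ν)]
    apply Measure.restrict_congr_set
    rw [ae_eq_univ]
    have hcompl : (⋃ j : ℤ, {y : ℤ → V | InfargmaxAt y j})ᶜ
        = {y : ℤ → V | ¬ ∃ j : ℤ, InfargmaxAt y j} := by
      ext y; simp [Set.mem_iUnion]
    rw [hcompl]
    exact hnuN
  -- key identity for a single j
  have key : ∀ H : (ℤ → V) → ℝ≥0∞, Measurable H → ∀ j : ℤ,
      ∫⁻ y in {y : ℤ → V | InfargmaxAt y j}, H y ∂ν
        = ∫⁻ r in Ioi (0:ℝ),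
            (∫⁻ ω in {ω | InfargmaxAt (Θ ω) 0}, H (r • backshift j (Θ ω)) ∂P) *
              ENNReal.ofReal (α * r ^ (-α - 1)) := by
    intro H mH j
    have mG : Measurable (fun y => ({y : ℤ → V | InfargmaxAt y 0}.indicator
        (fun y' => H (backshift j y')) y)) :=
      (mH.comp (measurable_backshift j)).indicator (mA 0)
    have stepA : ∫⁻ y in {y : ℤ → V | InfargmaxAt y j}, H y ∂ν
        = ∫⁻ y, ({y : ℤ → V | InfargmaxAt y 0}.indicator
            (fun y' => H (backshift j y')) y) ∂ν := by
      rw [← lintegral_indicator (mA j)]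
      conv_lhs => rw [← hmap j]
      rw [lintegral_map (mH.indicator (mA j)) (measurable_backshift j)]
      apply lintegral_congr
      intro y
      simp only [Set.indicator_apply, Set.mem_setOf_eq]
      have hiff : InfargmaxAt (backshift j y) j ↔ InfargmaxAt y 0 := by
        rw [infargmaxAt_backshift, sub_self]
      by_cases hy : InfargmaxAt y 0
      · rw [if_pos (hiff.mpr hy), if_pos hy]
      · rw [if_neg (fun hh => hy (hiff.mp hh)), if_neg hy]
    have hA0sub : {y : ℤ → V | InfargmaxAt y 0} ⊆ {y : ℤ → V | y 0 ≠ 0} :=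
      fun y hy => infargmaxAt_ne_zero y 0 hy
    have stepB : ∫⁻ y, ({y : ℤ → V | InfargmaxAt y 0}.indicator
          (fun y' => H (backshift j y')) y) ∂ν
        = ∫⁻ y in {y : ℤ → V | y 0 ≠ 0}, ({y : ℤ → V | InfargmaxAt y 0}.indicator
            (fun y' => H (backshift j y')) y) ∂ν := by
      rw [lintegral_indicator (mA 0), lintegral_indicator (mA 0),
        Measure.restrict_restrict (mA 0),
        Set.inter_eq_self_of_subset_left hA0sub]
    rw [stepA, stepB, hpolar _ mG]
    apply setLIntegral_congr_fun measurableSet_Ioi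
    intro r hr
    beta_reduce
    congr 1
    have hGr : ∀ ω, ({y : ℤ → V | InfargmaxAt y 0}.indicator
        (fun y' => H (backshift j y')) (r • Θ ω))
        = ({ω' | InfargmaxAt (Θ ω') 0}.indicator
            (fun ω' => H (r • backshift j (Θ ω'))) ω) := by
      intro ω
      simp only [Set.indicator_apply, Set.mem_setOf_eq]
      have hiff : InfargmaxAt (r • Θ ω) 0 ↔ InfargmaxAt (Θ ω) 0 :=
        infargmaxAt_smul hr (Θ ω) 0
      by_cases hω : InfargmaxAt (Θ ω) 0
      · rw [if_pos (hiff.mpr hω), if_pos hω, backshift_smul]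
      · rw [if_neg (fun hh => hω (hiff.mp hh)), if_neg hω]
    rw [lintegral_congr hGr, lintegral_indicator mW]
  -- part 2
  have part2 : ∀ H : (ℤ → V) → ℝ≥0∞, Measurable H →
      ∫⁻ y, H y ∂ν
        = ∑' j : ℤ, ∫⁻ r in Ioi (0 : ℝ),
            (∫⁻ ω in {ω | InfargmaxAt (Θ ω) 0}, H (r • backshift j (Θ ω)) ∂P) *
              ENNReal.ofReal (α * r ^ (-α - 1)) := by
    intro H mH
    have hdisj : Pairwise (Function.onFun Disjoint
        fun j : ℤ => {y : ℤ → V | InfargmaxAt y j}) := by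
      intro i j hij
      rw [Function.onFun, Set.disjoint_left]
      intro y hyi hyj
      exact hij (infargmaxAt_unique y hyi hyj)
    calc ∫⁻ y, H y ∂ν
        = ∫⁻ y in ⋃ j : ℤ, {y : ℤ → V | InfargmaxAt y j}, H y ∂ν := by rw [hrestr]
      _ = ∑' j : ℤ, ∫⁻ y in {y : ℤ → V | InfargmaxAt y j}, H y ∂ν :=
          lintegral_iUnion (fun j => mA j) hdisj H
      _ = _ := tsum_congr fun j => key H mH j
  -- an application with the indicator of {1 < ‖y 0‖}
  have mS1 : MeasurableSet {y : ℤ → V | 1 < ‖y 0‖} :=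
    measurableSet_lt measurable_const ((measurable_pi_apply (0:ℤ)).norm)
  have hone := part2 ({y : ℤ → V | 1 < ‖y 0‖}.indicator fun _ => (1:ℝ≥0∞))
    (measurable_const.indicator mS1)
  rw [lintegral_indicator mS1, setLIntegral_one, hν1] at hone
  -- part 1
  have part1 : 0 < P {ω | InfargmaxAt (Θ ω) 0} := by
    rcases (zero_le : 0 ≤ P {ω | InfargmaxAt (Θ ω) 0}).lt_or_eq with h | h
    · exact h
    · exfalso
      have h0 : P.restrict {ω | InfargmaxAt (Θ ω) 0} = 0 :=
        Measure.restrict_eq_zero.mpr h.symm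
      rw [show (∑' j : ℤ, ∫⁻ r in Ioi (0 : ℝ),
          (∫⁻ ω in {ω | InfargmaxAt (Θ ω) 0},
            ({y : ℤ → V | 1 < ‖y 0‖}.indicator (fun _ => (1:ℝ≥0∞)))
              (r • backshift j (Θ ω)) ∂P) *
            ENNReal.ofReal (α * r ^ (-α - 1))) = 0 by
          simp [h0]] at hone
      exact one_ne_zero hone
  -- part 3
  have part3 : ∑' j : ℤ, ∫⁻ ω in {ω | InfargmaxAt (Θ ω) 0},
      ENNReal.ofReal (‖Θ ω j‖ ^ α) ∂P = 1 := by
    have claim : ∀ j : ℤ,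
        (∫⁻ r in Ioi (0 : ℝ),
          (∫⁻ ω in {ω | InfargmaxAt (Θ ω) 0},
            ({y : ℤ → V | 1 < ‖y 0‖}.indicator (fun _ => (1:ℝ≥0∞)))
              (r • backshift j (Θ ω)) ∂P) *
            ENNReal.ofReal (α * r ^ (-α - 1)))
        = ∫⁻ ω in {ω | InfargmaxAt (Θ ω) 0},
            ENNReal.ofReal (‖Θ ω (-j)‖ ^ α) ∂P := by
      intro j
      have step1 : ∀ r ∈ Ioi (0:ℝ),
          (∫⁻ ω in {ω | InfargmaxAt (Θ ω) 0},
            ({y : ℤ → V | 1 < ‖y 0‖}.indicator (fun _ => (1:ℝ≥0∞)))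
              (r • backshift j (Θ ω)) ∂P) *
            ENNReal.ofReal (α * r ^ (-α - 1))
          = ∫⁻ ω in {ω | InfargmaxAt (Θ ω) 0},
              (if 1 < r * ‖Θ ω (-j)‖ then (1:ℝ≥0∞) else 0) *
                ENNReal.ofReal (α * r ^ (-α - 1)) ∂P := by
        intro r hr
        rw [← lintegral_mul_const' _ _ ENNReal.ofReal_ne_top]
        apply lintegral_congr
        intro ω
        congr 1
        simp only [Set.indicator_apply, Set.mem_setOf_eq]
        have hnorm : ‖(r • backshift j (Θ ω)) 0‖ = r * ‖Θ ω (-j)‖ := by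
          rw [Pi.smul_apply, norm_smul, Real.norm_eq_abs, abs_of_pos hr]
          show r * ‖Θ ω (0 - j)‖ = r * ‖Θ ω (-j)‖
          rw [zero_sub]
        simp only [hnorm]
      rw [setLIntegral_congr_fun measurableSet_Ioi step1]
      have mF : Measurable (Function.uncurry fun (r : ℝ) (ω : Ω) =>
          (if 1 < r * ‖Θ ω (-j)‖ then (1:ℝ≥0∞) else 0) *
            ENNReal.ofReal (α * r ^ (-α - 1))) := by
        apply Measurable.mul
        · apply Measurable.ite _ measurable_const measurable_const
          exact measurableSet_lt measurable_const
            (measurable_fst.mul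
              (((measurable_pi_apply (-j)).comp (mΘ.comp measurable_snd)).norm))
        · exact ENNReal.measurable_ofReal.comp
            (measurable_const.mul ((measurable_fst.pow_const _)))
      rw [lintegral_lintegral_swap mF.aemeasurable]
      apply lintegral_congr
      intro ω
      exact lintegral_if_pareto hα _ (norm_nonneg _)
    rw [show (∑' j : ℤ, ∫⁻ ω in {ω | InfargmaxAt (Θ ω) 0},
        ENNReal.ofReal (‖Θ ω j‖ ^ α) ∂P)
        = ∑' j : ℤ, ∫⁻ ω in {ω | InfargmaxAt (Θ ω) 0},
            ENNReal.ofReal (‖Θ ω (-j)‖ ^ α) ∂P from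
      ((Equiv.neg ℤ).tsum_eq fun j => ∫⁻ ω in {ω | InfargmaxAt (Θ ω) 0},
        ENNReal.ofReal (‖Θ ω j‖ ^ α) ∂P).symm]
    rw [← tsum_congr claim]
    exact hone.symm
  exact ⟨part1, part2, part3⟩
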